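/- Let (u_n)_{n≥1} be a sequence of elements of ℤ_p such that u_1, u_2, u_3, u_4 are units of ℤ_p and u_n·u_{n+4} = u_{n+1}·u_{n+3} + u_{n+2}² for all n ≥ 1 (a Somos 4 sequence with invertible initial values). Then for every i ≥ 1, at most one of the four consecutive terms u_i, u_{i+1}, u_{i+2}, u_{i+3} is not invertible in ℤ_p. -/
import Mathlib


/-- In a `p`-adic Somos 4 sequence with invertible initial values, at most one of any
four consecutive terms is not invertible in `ℤ_p`. -/
theorem stmt19 {p : ℕ} [Fact p.Prime] (u : ℕ → ℤ_[p])
    (h1 : IsUnit (u 1)) (h2 : IsUnit (u 2)) (h3 : IsUnit (u 3)) (h4 : IsUnit (u 4))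
    (hrec : ∀ n, 1 ≤ n → u n * u (n + 4) = u (n + 1) * u (n + 3) + u (n + 2) ^ 2) :
    ∀ i, 1 ≤ i → ∀ j k, j ∈ Finset.Ico i (i + 4) → k ∈ Finset.Ico i (i + 4) →
      ¬ IsUnit (u j) → ¬ IsUnit (u k) → j = k := by
  -- In a local ring, the sum of two nonunits is a nonunit.
  have nonunit_add : ∀ x y : ℤ_[p], ¬IsUnit x → ¬IsUnit y → ¬IsUnit (x + y) := by
    intro x y hx hy
    have hx' : x ∈ IsLocalRing.maximalIdeal ℤ_[p] := by
      rwa [IsLocalRing.mem_maximalIdeal, mem_nonunits_iff]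
    have hy' : y ∈ IsLocalRing.maximalIdeal ℤ_[p] := by
      rwa [IsLocalRing.mem_maximalIdeal, mem_nonunits_iff]
    have := Ideal.add_mem _ hx' hy'
    rwa [IsLocalRing.mem_maximalIdeal, mem_nonunits_iff] at this
  -- unit + nonunit is a unit
  have unit_add : ∀ x y : ℤ_[p], IsUnit x → ¬IsUnit y → IsUnit (x + y) := by
    intro x y hx hy
    by_contra hxy
    have hny : ¬IsUnit (-y) := fun h => hy (by simpa using h.neg)
    have := nonunit_add _ _ hxy hny
    simp at this
    exact this hx
  have add_unit : ∀ x y : ℤ_[p], ¬IsUnit x → IsUnit y → IsUnit (x + y) := by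
    intro x y hx hy
    rw [add_comm]; exact unit_add y x hy hx
  have mul_nonunit : ∀ x y : ℤ_[p], ¬IsUnit y → ¬IsUnit (x * y) := by
    intro x y hy h
    exact hy (isUnit_of_mul_isUnit_right h)
  have mul_nonunit' : ∀ x y : ℤ_[p], ¬IsUnit x → ¬IsUnit (x * y) := by
    intro x y hx h
    exact hx (isUnit_of_mul_isUnit_left h)
  have sq_nonunit : ∀ x : ℤ_[p], ¬IsUnit x → ¬IsUnit (x ^ 2) := by
    intro x hx
    rw [sq]; exact mul_nonunit x x hx
  -- main invariant
  have main : ∀ i, 1 ≤ i → ∀ a b, a < 4 → b < 4 →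
      ¬IsUnit (u (i + a)) → ¬IsUnit (u (i + b)) → a = b := by
    intro i hi
    induction i, hi using Nat.le_induction with
    | base =>
      intro a b ha hb hua hub
      exfalso
      apply hua
      interval_cases a
      · exact h1
      · exact h2
      · exact h3
      · exact h4
    | succ i hi ih =>
      intro a b ha hb hua hub
      -- if both indices are within the old window, use ih
      by_cases ha3 : a = 3
      · by_cases hb3 : b = 3
        · rw [ha3, hb3]
        · exfalso
          -- u (i+4) nonunit and u (i+1+b) nonunit with b < 3
          have hb' : b < 3 := lt_of_le_of_ne (by omega) hb3
          have h4n : ¬IsUnit (u (i + 4)) := by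
            have : i + 1 + a = i + 4 := by omega
            rwa [this] at hua
          have hbn : ¬IsUnit (u (i + (b + 1))) := by
            have : i + 1 + b = i + (b + 1) := by omega
            rwa [this] at hub
          -- all other terms in window i are units
          have hu : ∀ c, c < 4 → c ≠ b + 1 → IsUnit (u (i + c)) := by
            intro c hc hcb
            by_contra hcn
            exact hcb (ih c (b + 1) hc (by omega) hcn hbn)
          have hr := hrec i (by omega)
          have hLHS : ¬IsUnit (u i * u (i + 4)) := mul_nonunit _ _ h4n
          rw [hr] at hLHS
          apply hLHS
          interval_cases b
          · -- u(i+1) nonunit; u(i+2), u(i+3) units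
            exact add_unit _ _ (mul_nonunit' _ _ hbn)
              (IsUnit.pow 2 (hu 2 (by omega) (by omega)))
          · -- u(i+2) nonunit
            exact unit_add _ _
              (IsUnit.mul (hu 1 (by omega) (by omega)) (hu 3 (by omega) (by omega)))
              (sq_nonunit _ hbn)
          · -- u(i+3) nonunit
            exact add_unit _ _ (mul_nonunit _ _ hbn)
              (IsUnit.pow 2 (hu 2 (by omega) (by omega)))
      · by_cases hb3 : b = 3
        · exfalso
          have ha' : a < 3 := lt_of_le_of_ne (by omega) ha3
          have h4n : ¬IsUnit (u (i + 4)) := by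
            have : i + 1 + b = i + 4 := by omega
            rwa [this] at hub
          have han : ¬IsUnit (u (i + (a + 1))) := by
            have : i + 1 + a = i + (a + 1) := by omega
            rwa [this] at hua
          have hu : ∀ c, c < 4 → c ≠ a + 1 → IsUnit (u (i + c)) := by
            intro c hc hca
            by_contra hcn
            exact hca (ih c (a + 1) hc (by omega) hcn han)
          have hr := hrec i (by omega)
          have hLHS : ¬IsUnit (u i * u (i + 4)) := mul_nonunit _ _ h4n
          rw [hr] at hLHS
          apply hLHS
          interval_cases a
          · exact add_unit _ _ (mul_nonunit' _ _ han)
              (IsUnit.pow 2 (hu 2 (by omega) (by omega)))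
          · exact unit_add _ _
              (IsUnit.mul (hu 1 (by omega) (by omega)) (hu 3 (by omega) (by omega)))
              (sq_nonunit _ han)
          · exact add_unit _ _ (mul_nonunit _ _ han)
              (IsUnit.pow 2 (hu 2 (by omega) (by omega)))
        · -- both within old window
          have hua' : ¬IsUnit (u (i + (a + 1))) := by
            have : i + 1 + a = i + (a + 1) := by omega
            rwa [this] at hua
          have hub' : ¬IsUnit (u (i + (b + 1))) := by
            have : i + 1 + b = i + (b + 1) := by omega
            rwa [this] at hub
          have := ih (a + 1) (b + 1) (by omega) (by omega) hua' hub'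
          omega
  intro i hi j k hj hk huj huk
  rw [Finset.mem_Ico] at hj hk
  have hj' : j = i + (j - i) := by omega
  have hk' : k = i + (k - i) := by omega
  rw [hj'] at huj
  rw [hk'] at huk
  have := main i hi (j - i) (k - i) (by omega) (by omega) huj huk
  omega
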